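/- For all i ≥ -1, the norms N_i = |N(α_i)| of the convergents satisfy N_{i+1} = √Δ/γ_{i+2} - N_i/γ_{i+2}², where γ_{i+2} = [u_{i+2}; u_{i+3}, u_{i+4}, …] is the tail of the continued fraction and Δ is the discriminant of K. -/

import Mathlib

open Real Filter

noncomputable def omg (D : ℕ) : ℝ := if D % 4 = 1 then (1 + Real.sqrt D) / 2 else Real.sqrt D

noncomputable def omgc (D : ℕ) : ℝ := if D % 4 = 1 then (1 - Real.sqrt D) / 2 else -Real.sqrt D

noncomputable def sigmaD (D : ℕ) : ℝ := omg D + (⌊-omgc D⌋ : ℤ)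

noncomputable def gam (D : ℕ) : ℕ → ℝ
  | 0 => sigmaD D
  | n + 1 => 1 / (gam D n - ⌊gam D n⌋)

/-- partial quotients of the continued fraction of σ_D -/
noncomputable def uD (D : ℕ) (n : ℕ) : ℤ := ⌊gam D n⌋

noncomputable def emb1 (D : ℕ) (x : ℤ × ℤ) : ℝ := (x.1 : ℝ) + (x.2 : ℝ) * omg D

noncomputable def emb2 (D : ℕ) (x : ℤ × ℤ) : ℝ := (x.1 : ℝ) + (x.2 : ℝ) * omgc D

def conjp (D : ℕ) (x : ℤ × ℤ) : ℤ × ℤ := if D % 4 = 1 then (x.1 + x.2, -x.2) else (x.1, -x.2)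

def TotPos (D : ℕ) (x : ℤ × ℤ) : Prop := 0 < emb1 D x ∧ 0 < emb2 D x

def Indec (D : ℕ) (x : ℤ × ℤ) : Prop :=
  TotPos D x ∧ ¬ ∃ y z : ℤ × ℤ, TotPos D y ∧ TotPos D z ∧ x = y + z

noncomputable def Nm (D : ℕ) (x : ℤ × ℤ) : ℝ := emb1 D x * emb2 D x

noncomputable def disc (D : ℕ) : ℝ := if D % 4 = 1 then (D : ℝ) else 4 * (D : ℝ)

def UniqDec (D : ℕ) (x : ℤ × ℤ) : Prop :=
  ∃! m : Multiset (ℤ × ℤ), (∀ y ∈ m, Indec D y) ∧ m.sum = x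

/-- first real embedding of α_i = p_i - q_i ω_D' -/
noncomputable def ar (D : ℕ) (p q : ℤ → ℤ) (i : ℤ) : ℝ := (p i : ℝ) - (q i : ℝ) * omgc D

/-- second real embedding (Galois conjugate) of α_i -/
noncomputable def ac (D : ℕ) (p q : ℤ → ℤ) (i : ℤ) : ℝ := (p i : ℝ) - (q i : ℝ) * omg D

/-- first embedding of the semiconvergent α_{i,r} = α_i + r α_{i+1} -/
noncomputable def ar2 (D : ℕ) (p q : ℤ → ℤ) (i r : ℤ) : ℝ := ar D p q i + (r : ℝ) * ar D p q (i + 1)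

/-- conjugate embedding of the semiconvergent α_{i,r} -/
noncomputable def ac2 (D : ℕ) (p q : ℤ → ℤ) (i r : ℤ) : ℝ := ac D p q i + (r : ℝ) * ac D p q (i + 1)

/-- N_i = |N(α_i)| -/
noncomputable def Ni (D : ℕ) (p q : ℤ → ℤ) (i : ℤ) : ℝ := |ar D p q i * ac D p q i|

section Aux

variable {D : ℕ}

lemma aux_irr_sqrt (hD2 : 2 ≤ D) (hsq : Squarefree D) : Irrational (Real.sqrt D) := by
  rw [irrational_sqrt_natCast_iff]
  rintro ⟨r, hr⟩
  have hu := Nat.isUnit_iff.mp (hsq r (by rw [hr]))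
  rw [hu] at hr
  omega

lemma aux_irr_omg (hD2 : 2 ≤ D) (hsq : Squarefree D) : Irrational (omg D) := by
  have h := aux_irr_sqrt hD2 hsq
  unfold omg
  split
  · have h2 : Irrational ((1 : ℤ) + Real.sqrt D) := h.intCast_add 1
    have h3 := h2.div_intCast (m := 2) (by norm_num)
    simpa using h3
  · exact h

lemma aux_irr_gam (hD2 : 2 ≤ D) (hsq : Squarefree D) : ∀ n, Irrational (gam D n) := by
  intro n
  induction n with
  | zero =>
    show Irrational (sigmaD D)
    exact (aux_irr_omg hD2 hsq).add_intCast _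
  | succ n ih =>
    show Irrational (1 / (gam D n - ⌊gam D n⌋))
    rw [one_div]
    exact (ih.sub_intCast _).inv

lemma aux_fract_pos (hD2 : 2 ≤ D) (hsq : Squarefree D) (n : ℕ) :
    0 < gam D n - ⌊gam D n⌋ := by
  have h := aux_irr_gam hD2 hsq n
  have := Int.fract_pos.mpr (h.ne_int ⌊gam D n⌋)
  rw [Int.fract] at this
  linarith

lemma aux_gam_gt_one (hD2 : 2 ≤ D) (hsq : Squarefree D) (n : ℕ) :
    1 < gam D (n + 1) := by
  have hp := aux_fract_pos hD2 hsq n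
  have hl : gam D n - ⌊gam D n⌋ < 1 := by
    have := Int.fract_lt_one (gam D n)
    rw [Int.fract] at this
    linarith
  show 1 < 1 / (gam D n - ⌊gam D n⌋)
  rw [lt_div_iff₀ hp]
  linarith

lemma aux_gam_recur (hD2 : 2 ≤ D) (hsq : Squarefree D) (n : ℕ) :
    gam D n - uD D n = 1 / gam D (n + 1) := by
  have hp := aux_fract_pos hD2 hsq n
  show _ = 1 / (1 / (gam D n - ⌊gam D n⌋))
  rw [one_div_one_div]
  rfl

lemma aux_u_ge_one (hD2 : 2 ≤ D) (hsq : Squarefree D) (n : ℕ) :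
    1 ≤ uD D (n + 1) := by
  have := aux_gam_gt_one hD2 hsq n
  exact Int.le_floor.mpr (by exact_mod_cast this.le)

end Aux
section Aux2

variable {D : ℕ}

lemma aux_u0 : uD D 0 = ⌊omg D⌋ + ⌊-omgc D⌋ := by
  show ⌊gam D 0⌋ = _
  show ⌊sigmaD D⌋ = _
  unfold sigmaD
  rw [Int.floor_add_intCast]

lemma aux_negomgc (h : D % 4 = 1) : -omgc D = omg D - 1 := by
  unfold omg omgc; rw [if_pos h, if_pos h]; ring

lemma aux_negomgc' (h : ¬ D % 4 = 1) : -omgc D = omg D := by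
  unfold omg omgc; rw [if_neg h, if_neg h]; ring

lemma aux_p0 : ⌈(uD D 0 : ℚ) / 2⌉ = ⌊omg D⌋ := by
  rw [aux_u0]
  by_cases h : D % 4 = 1
  · rw [aux_negomgc h]
    have hfl : ⌊omg D - 1⌋ = ⌊omg D⌋ - 1 := by
      rw [show omg D - 1 = omg D + ((-1 : ℤ) : ℝ) by push_cast; ring, Int.floor_add_intCast]
      omega
    rw [hfl]
    rw [Int.ceil_eq_iff]
    constructor
    · push_cast; linarith
    · push_cast; linarith
  · rw [aux_negomgc' h]
    rw [show ((⌊omg D⌋ + ⌊omg D⌋ : ℤ) : ℚ) / 2 = ((⌊omg D⌋ : ℤ) : ℚ) by push_cast; ring,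
      Int.ceil_intCast]

lemma aux_base : omg D - (⌊omg D⌋ : ℝ) = gam D 0 - (uD D 0 : ℝ) := by
  rw [aux_u0]
  show _ = sigmaD D - _
  unfold sigmaD
  push_cast
  ring

lemma aux_disc_sqrt : omg D - omgc D = Real.sqrt (disc D) := by
  unfold omg omgc disc
  by_cases h : D % 4 = 1
  · rw [if_pos h, if_pos h, if_pos h]; ring
  · rw [if_neg h, if_neg h, if_neg h]
    rw [show (4 : ℝ) * (D : ℝ) = 2 ^ 2 * (D : ℝ) by ring, Real.sqrt_mul (by positivity),
      Real.sqrt_sq (by norm_num)]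
    ring

lemma aux_sqrt_disc_ge_one (hD2 : 2 ≤ D) : 1 ≤ Real.sqrt (disc D) := by
  have hD : (2 : ℝ) ≤ (D : ℝ) := by exact_mod_cast hD2
  have h1 : (1 : ℝ) ≤ disc D := by unfold disc; split <;> linarith
  have := (Real.le_sqrt' one_pos (y := disc D)).mpr (by norm_num; linarith)
  exact this

end Aux2
section Aux3

variable {D : ℕ} {p q : ℤ → ℤ}

lemma aux_qbound (hD2 : 2 ≤ D) (hsq : Squarefree D)
    (hqm1 : q (-1) = 0) (hq0 : q 0 = 1)
    (hqrec : ∀ i : ℤ, -1 ≤ i → q (i + 2) = uD D (i + 2).toNat * q (i + 1) + q i) :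
    ∀ i : ℤ, -1 ≤ i → 0 ≤ q i ∧ 1 ≤ q (i + 1) := by
  intro i hi
  refine Int.le_induction (motive := fun i _ => 0 ≤ q i ∧ 1 ≤ q (i + 1)) ?_ ?_ i hi
  · norm_num [hqm1, hq0]
  · intro i hi ih
    obtain ⟨h0, h1⟩ := ih
    have e2 : i + 1 + 1 = i + 2 := by ring
    refine ⟨by linarith, ?_⟩
    rw [e2, hqrec i hi]
    have hn : (i + 2).toNat = (i + 1).toNat + 1 := by omega
    have hu : 1 ≤ uD D (i + 2).toNat := by rw [hn]; exact aux_u_ge_one hD2 hsq _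
    nlinarith

lemma aux_lemA (hD2 : 2 ≤ D) (hsq : Squarefree D)
    (hpm1 : p (-1) = 1) (hqm1 : q (-1) = 0)
    (hp0 : p 0 = ⌈(uD D 0 : ℚ) / 2⌉) (hq0 : q 0 = 1)
    (hprec : ∀ i : ℤ, -1 ≤ i → p (i + 2) = uD D (i + 2).toNat * p (i + 1) + p i)
    (hqrec : ∀ i : ℤ, -1 ≤ i → q (i + 2) = uD D (i + 2).toNat * q (i + 1) + q i) :
    ∀ i : ℤ, 0 ≤ i →
      (p i : ℝ) * gam D (i + 1).toNat + (p (i - 1) : ℝ) =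
        omg D * ((q i : ℝ) * gam D (i + 1).toNat + (q (i - 1) : ℝ)) := by
  intro i hi
  refine Int.le_induction (motive := fun i _ =>
    (p i : ℝ) * gam D (i + 1).toNat + (p (i - 1) : ℝ) =
      omg D * ((q i : ℝ) * gam D (i + 1).toNat + (q (i - 1) : ℝ))) ?_ ?_ i hi
  · norm_num [hpm1, hqm1, hq0]
    have hg : (1 : ℝ) < gam D 1 := aux_gam_gt_one hD2 hsq 0
    have hg0 : gam D 1 ≠ 0 := by linarith
    have hpp : (p 0 : ℝ) = (⌊omg D⌋ : ℝ) := by rw [hp0, aux_p0]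
    have hω : omg D = (p 0 : ℝ) + 1 / gam D 1 := by
      have hb := aux_base (D := D)
      have hr := aux_gam_recur hD2 hsq 0
      rw [hpp]; linarith
    rw [hω]; field_simp
  · intro i hi ih
    simp only [show i + 1 + 1 = i + 2 from by ring, show i + 1 - 1 = i from by ring]
    have hn1 : (i + 2).toNat = (i + 1).toNat + 1 := by omega
    have hprec' := hprec (i - 1) (by linarith)
    have hqrec' := hqrec (i - 1) (by linarith)
    simp only [show i - 1 + 2 = i + 1 from by ring, show i - 1 + 1 = i from by ring] at hprec' hqrec'
    have hg : (1 : ℝ) < gam D ((i + 1).toNat + 1) := aux_gam_gt_one hD2 hsq _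
    have hg0 : gam D ((i + 1).toNat + 1) ≠ 0 := by linarith
    have hr := aux_gam_recur hD2 hsq (i + 1).toNat
    have hr' : gam D ((i + 1).toNat + 1) * (gam D (i + 1).toNat - (uD D (i + 1).toNat : ℝ)) = 1 := by
      rw [hr]; field_simp
    rw [hn1, hprec', hqrec']
    push_cast
    linear_combination gam D ((i + 1).toNat + 1) * ih +
      (omg D * (q i : ℝ) - (p i : ℝ)) * hr'

lemma aux_det
    (hpm1 : p (-1) = 1) (hqm1 : q (-1) = 0) (hq0 : q 0 = 1)
    (hprec : ∀ i : ℤ, -1 ≤ i → p (i + 2) = uD D (i + 2).toNat * p (i + 1) + p i)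
    (hqrec : ∀ i : ℤ, -1 ≤ i → q (i + 2) = uD D (i + 2).toNat * q (i + 1) + q i) :
    ∀ i : ℤ, -1 ≤ i → p i * q (i + 1) - p (i + 1) * q i = (-1) ^ ((i + 1).toNat) := by
  intro i hi
  refine Int.le_induction (motive := fun i _ =>
    p i * q (i + 1) - p (i + 1) * q i = (-1) ^ ((i + 1).toNat)) ?_ ?_ i hi
  · norm_num [hpm1, hqm1, hq0]
  · intro i hi ih
    simp only [show i + 1 + 1 = i + 2 from by ring]
    rw [hprec i hi, hqrec i hi, show (i + 2).toNat = (i + 1).toNat + 1 from by omega, pow_succ]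
    linear_combination (-1 : ℤ) * ih

lemma aux_lemC (hD2 : 2 ≤ D) (hsq : Squarefree D)
    (hpm1 : p (-1) = 1) (hqm1 : q (-1) = 0)
    (hp0 : p 0 = ⌈(uD D 0 : ℚ) / 2⌉) (hq0 : q 0 = 1)
    (hprec : ∀ i : ℤ, -1 ≤ i → p (i + 2) = uD D (i + 2).toNat * p (i + 1) + p i)
    (hqrec : ∀ i : ℤ, -1 ≤ i → q (i + 2) = uD D (i + 2).toNat * q (i + 1) + q i) :
    ∀ i : ℤ, -1 ≤ i →
      ac D p q i * ((q (i + 1) : ℝ) * gam D (i + 2).toNat + (q i : ℝ)) =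
        (-1 : ℝ) ^ ((i + 1).toNat) * gam D (i + 2).toNat := by
  intro i hi
  have hA := aux_lemA hD2 hsq hpm1 hqm1 hp0 hq0 hprec hqrec (i + 1) (by linarith)
  simp only [show i + 1 - 1 = i from by ring, show i + 1 + 1 = i + 2 from by ring] at hA
  have hd := aux_det hpm1 hqm1 hq0 hprec hqrec i hi
  have hdR : (p i : ℝ) * (q (i + 1) : ℝ) - (p (i + 1) : ℝ) * (q i : ℝ) =
      (-1 : ℝ) ^ ((i + 1).toNat) := by exact_mod_cast hd
  unfold ac
  linear_combination (q i : ℝ) * hA + gam D (i + 2).toNat * hdR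

lemma aux_acrel (hD2 : 2 ≤ D) (hsq : Squarefree D)
    (hpm1 : p (-1) = 1) (hqm1 : q (-1) = 0)
    (hp0 : p 0 = ⌈(uD D 0 : ℚ) / 2⌉) (hq0 : q 0 = 1)
    (hprec : ∀ i : ℤ, -1 ≤ i → p (i + 2) = uD D (i + 2).toNat * p (i + 1) + p i)
    (hqrec : ∀ i : ℤ, -1 ≤ i → q (i + 2) = uD D (i + 2).toNat * q (i + 1) + q i) :
    ∀ i : ℤ, -1 ≤ i →
      gam D (i + 2).toNat * ac D p q (i + 1) = - ac D p q i := by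
  intro i hi
  have hA := aux_lemA hD2 hsq hpm1 hqm1 hp0 hq0 hprec hqrec (i + 1) (by linarith)
  simp only [show i + 1 - 1 = i from by ring, show i + 1 + 1 = i + 2 from by ring] at hA
  unfold ac
  linear_combination hA

end Aux3
section Aux4

variable {D : ℕ} {p q : ℤ → ℤ}

lemma aux_ee (n : ℕ) : (-1 : ℝ) ^ n * (-1 : ℝ) ^ n = 1 := by
  rw [← pow_add]
  exact Even.neg_one_pow ⟨n, rfl⟩

lemma aux_gamG (hD2 : 2 ≤ D) (hsq : Squarefree D) {i : ℤ} (hi : -1 ≤ i) :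
    1 < gam D (i + 2).toNat := by
  rw [show (i + 2).toNat = (i + 1).toNat + 1 from by omega]
  exact aux_gam_gt_one hD2 hsq _

lemma aux_sign (hD2 : 2 ≤ D) (hsq : Squarefree D)
    (hpm1 : p (-1) = 1) (hqm1 : q (-1) = 0)
    (hp0 : p 0 = ⌈(uD D 0 : ℚ) / 2⌉) (hq0 : q 0 = 1)
    (hprec : ∀ i : ℤ, -1 ≤ i → p (i + 2) = uD D (i + 2).toNat * p (i + 1) + p i)
    (hqrec : ∀ i : ℤ, -1 ≤ i → q (i + 2) = uD D (i + 2).toNat * q (i + 1) + q i) :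
    ∀ i : ℤ, -1 ≤ i → 0 < (-1 : ℝ) ^ ((i + 1).toNat) * ac D p q i := by
  intro i hi
  have hC := aux_lemC hD2 hsq hpm1 hqm1 hp0 hq0 hprec hqrec i hi
  have hee := aux_ee ((i + 1).toNat)
  obtain ⟨hq0', hq1'⟩ := aux_qbound hD2 hsq hqm1 hq0 hqrec i hi
  have hG : 1 < gam D (i + 2).toNat := aux_gamG hD2 hsq hi
  have hq0R : (0 : ℝ) ≤ (q i : ℝ) := by exact_mod_cast hq0'
  have hq1R : (1 : ℝ) ≤ (q (i + 1) : ℝ) := by exact_mod_cast hq1'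
  have hden : 0 < (q (i + 1) : ℝ) * gam D (i + 2).toNat + (q i : ℝ) := by nlinarith
  have h2 : ((-1 : ℝ) ^ ((i + 1).toNat) * ac D p q i) *
      ((q (i + 1) : ℝ) * gam D (i + 2).toNat + (q i : ℝ)) = gam D (i + 2).toNat := by
    linear_combination (-1 : ℝ) ^ ((i + 1).toNat) * hC + gam D (i + 2).toNat * hee
  have h3 : (-1 : ℝ) ^ ((i + 1).toNat) * ac D p q i =
      gam D (i + 2).toNat / ((q (i + 1) : ℝ) * gam D (i + 2).toNat + (q i : ℝ)) := by
    rw [eq_div_iff hden.ne']; exact h2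
  rw [h3]
  exact div_pos (by linarith) hden

lemma aux_ar_eq (i : ℤ) :
    ar D p q i = ac D p q i + (q i : ℝ) * Real.sqrt (disc D) := by
  unfold ar ac
  linear_combination (q i : ℝ) * (aux_disc_sqrt (D := D))

lemma aux_ar_nonneg (hD2 : 2 ≤ D) (hsq : Squarefree D)
    (hpm1 : p (-1) = 1) (hqm1 : q (-1) = 0)
    (hp0 : p 0 = ⌈(uD D 0 : ℚ) / 2⌉) (hq0 : q 0 = 1)
    (hprec : ∀ i : ℤ, -1 ≤ i → p (i + 2) = uD D (i + 2).toNat * p (i + 1) + p i)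
    (hqrec : ∀ i : ℤ, -1 ≤ i → q (i + 2) = uD D (i + 2).toNat * q (i + 1) + q i) :
    ∀ i : ℤ, -1 ≤ i → 0 ≤ ar D p q i := by
  intro i hi
  rcases eq_or_lt_of_le hi with heq | hlt
  · rw [← heq]
    unfold ar
    rw [hpm1, hqm1]
    norm_num
  · have hi0 : (0 : ℤ) ≤ i := by linarith
    have hC := aux_lemC hD2 hsq hpm1 hqm1 hp0 hq0 hprec hqrec i hi
    have hee := aux_ee ((i + 1).toNat)
    have hs := aux_sign hD2 hsq hpm1 hqm1 hp0 hq0 hprec hqrec i hi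
    obtain ⟨hq0', hq1'⟩ := aux_qbound hD2 hsq hqm1 hq0 hqrec i hi
    obtain ⟨hq0'', hq1''⟩ := aux_qbound hD2 hsq hqm1 hq0 hqrec (i - 1) (by linarith)
    rw [show i - 1 + 1 = i from by ring] at hq1''
    have hG : 1 < gam D (i + 2).toNat := aux_gamG hD2 hsq hi
    have hqiR : (1 : ℝ) ≤ (q i : ℝ) := by exact_mod_cast hq1''
    have hq1R : (1 : ℝ) ≤ (q (i + 1) : ℝ) := by exact_mod_cast hq1'
    have hden : 0 < (q (i + 1) : ℝ) * gam D (i + 2).toNat + (q i : ℝ) := by nlinarith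
    have h2 : ((-1 : ℝ) ^ ((i + 1).toNat) * ac D p q i) *
        ((q (i + 1) : ℝ) * gam D (i + 2).toNat + (q i : ℝ)) = gam D (i + 2).toNat := by
      linear_combination (-1 : ℝ) ^ ((i + 1).toNat) * hC + gam D (i + 2).toNat * hee
    have hdenG : gam D (i + 2).toNat <
        (q (i + 1) : ℝ) * gam D (i + 2).toNat + (q i : ℝ) := by nlinarith
    have h3 : (-1 : ℝ) ^ ((i + 1).toNat) * ac D p q i < 1 := by
      nlinarith
    have hacm : -1 < ac D p q i := by
      rcases Nat.even_or_odd ((i + 1).toNat) with he | he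
      · rw [he.neg_one_pow] at hs h3; linarith
      · rw [he.neg_one_pow] at hs h3; linarith
    rw [aux_ar_eq i]
    have hsd := aux_sqrt_disc_ge_one (D := D) hD2
    nlinarith

lemma aux_Ni_eq (hD2 : 2 ≤ D) (hsq : Squarefree D)
    (hpm1 : p (-1) = 1) (hqm1 : q (-1) = 0)
    (hp0 : p 0 = ⌈(uD D 0 : ℚ) / 2⌉) (hq0 : q 0 = 1)
    (hprec : ∀ i : ℤ, -1 ≤ i → p (i + 2) = uD D (i + 2).toNat * p (i + 1) + p i)
    (hqrec : ∀ i : ℤ, -1 ≤ i → q (i + 2) = uD D (i + 2).toNat * q (i + 1) + q i) :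
    ∀ i : ℤ, -1 ≤ i →
      Ni D p q i = (-1 : ℝ) ^ ((i + 1).toNat) * (ar D p q i * ac D p q i) := by
  intro i hi
  have hs := aux_sign hD2 hsq hpm1 hqm1 hp0 hq0 hprec hqrec i hi
  have har := aux_ar_nonneg hD2 hsq hpm1 hqm1 hp0 hq0 hprec hqrec i hi
  have h1 : 0 ≤ (-1 : ℝ) ^ ((i + 1).toNat) * (ar D p q i * ac D p q i) := by
    have := mul_nonneg har hs.le
    nlinarith
  show |ar D p q i * ac D p q i| = _
  rw [← abs_of_nonneg h1]
  simp [abs_mul, abs_pow]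

end Aux4
theorem stmt13 (D : ℕ)
    (hD2 : 2 ≤ D) (hsq : Squarefree D)
    (p q : ℤ → ℤ)
    (hpm1 : p (-1) = 1) (hqm1 : q (-1) = 0)
    (hp0 : p 0 = ⌈(uD D 0 : ℚ) / 2⌉) (hq0 : q 0 = 1)
    (hprec : ∀ i : ℤ, -1 ≤ i → p (i + 2) = uD D (i + 2).toNat * p (i + 1) + p i)
    (hqrec : ∀ i : ℤ, -1 ≤ i → q (i + 2) = uD D (i + 2).toNat * q (i + 1) + q i)
 :
    ∀ i : ℤ, -1 ≤ i →
      Ni D p q (i + 1) =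
        Real.sqrt (disc D) / gam D (i + 2).toNat - Ni D p q i / (gam D (i + 2).toNat) ^ 2 := by
  intro i hi
  have hNe := aux_Ni_eq hD2 hsq hpm1 hqm1 hp0 hq0 hprec hqrec
  have h1 := hNe (i + 1) (by linarith)
  have h0 := hNe i hi
  have hrel := aux_acrel hD2 hsq hpm1 hqm1 hp0 hq0 hprec hqrec i hi
  have hC := aux_lemC hD2 hsq hpm1 hqm1 hp0 hq0 hprec hqrec i hi
  have hee := aux_ee ((i + 1).toNat)
  have hG : 1 < gam D (i + 2).toNat := aux_gamG hD2 hsq hi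
  have hG0 : gam D (i + 2).toNat ≠ 0 := by linarith
  have hE : (-1 : ℝ) ^ ((i + 1 + 1).toNat) = -((-1 : ℝ) ^ ((i + 1).toNat)) := by
    rw [show (i + 1 + 1).toNat = (i + 1).toNat + 1 from by omega, pow_succ]; ring
  have hac1 : ac D p q (i + 1) = - ac D p q i / gam D (i + 2).toNat := by
    rw [eq_div_iff hG0]; linarith [hrel]
  rw [h1, h0, hE, aux_ar_eq (i + 1), aux_ar_eq i, hac1]
  field_simp
  linear_combination (Real.sqrt (disc D) * (-1 : ℝ) ^ ((i + 1).toNat)) * hC +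
    (Real.sqrt (disc D) * gam D (i + 2).toNat) * hee
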